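/- Let I = [a,b], M₀ < M₁, and let G₀, G₁ : I × I → ℝ be continuous kernels satisfying G₁(t,s) = G₀(t,s) + (M₀−M₁)·∫ₐᵇ G₀(t,r)G₁(r,s) dr. Suppose G₀ ≥ 0 and G₁ ≥ 0 on I × I, and fix (t,s) ∈ (a,b)×(a,b). If G₀(t,·) > 0 except on a finite set and G₁(·,s) > 0 except on a finite set, then G₁(t,s) < G₀(t,s). -/

import Mathlib

theorem stmt_6 (a b M₀ M₁ : ℝ) (hab : a < b) (hM : M₀ < M₁) (G₀ G₁ : ℝ → ℝ → ℝ)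
    (hG₀ : ContinuousOn (fun q : ℝ × ℝ => G₀ q.1 q.2) (Set.Icc a b ×ˢ Set.Icc a b))
    (hG₁ : ContinuousOn (fun q : ℝ × ℝ => G₁ q.1 q.2) (Set.Icc a b ×ˢ Set.Icc a b))
    (hres : ∀ t ∈ Set.Icc a b, ∀ s ∈ Set.Icc a b,
      G₁ t s = G₀ t s + (M₀ - M₁) * ∫ r in a..b, G₀ t r * G₁ r s)
    (hG₀pos : ∀ t ∈ Set.Icc a b, ∀ s ∈ Set.Icc a b, 0 ≤ G₀ t s)
    (hG₁pos : ∀ t ∈ Set.Icc a b, ∀ s ∈ Set.Icc a b, 0 ≤ G₁ t s)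
    (t s : ℝ) (ht : t ∈ Set.Ioo a b) (hs : s ∈ Set.Ioo a b)
    (hG₀t : {r ∈ Set.Icc a b | G₀ t r = 0}.Finite)
    (hG₁s : {r ∈ Set.Icc a b | G₁ r s = 0}.Finite) :
    G₁ t s < G₀ t s := by
  have htI : t ∈ Set.Icc a b := Set.mem_Icc_of_Ioo ht
  have hsI : s ∈ Set.Icc a b := Set.mem_Icc_of_Ioo hs
  set f : ℝ → ℝ := fun r => G₀ t r * G₁ r s with hf
  have hcont : ContinuousOn f (Set.Icc a b) := by
    apply ContinuousOn.mul
    · exact hG₀.comp (continuousOn_const.prodMk continuousOn_id)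
        (fun r hr => Set.mk_mem_prod htI hr)
    · exact hG₁.comp (continuousOn_id.prodMk continuousOn_const)
        (fun r hr => Set.mk_mem_prod hr hsI)
  have hintOn : MeasureTheory.IntegrableOn f (Set.Ioc a b) := by
    exact (hcont.integrableOn_Icc).mono_set Set.Ioc_subset_Icc_self
  have hnn : ∀ r ∈ Set.Ioc a b, 0 ≤ f r := fun r hr =>
    mul_nonneg (hG₀pos t htI r (Set.Ioc_subset_Icc_self hr))
      (hG₁pos r (Set.Ioc_subset_Icc_self hr) s hsI)
  have hZ : ({r ∈ Set.Icc a b | G₀ t r = 0} ∪ {r ∈ Set.Icc a b | G₁ r s = 0}).Finite :=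
    hG₀t.union hG₁s
  have hsub : Set.Ioc a b \ ({r ∈ Set.Icc a b | G₀ t r = 0} ∪ {r ∈ Set.Icc a b | G₁ r s = 0})
      ⊆ Function.support f ∩ Set.Ioc a b := by
    intro r hr
    refine ⟨?_, hr.1⟩
    intro h0
    rcases mul_eq_zero.mp h0 with h | h
    · exact hr.2 (Or.inl ⟨Set.Ioc_subset_Icc_self hr.1, h⟩)
    · exact hr.2 (Or.inr ⟨Set.Ioc_subset_Icc_self hr.1, h⟩)
  have hmeas : 0 < MeasureTheory.volume (Function.support f ∩ Set.Ioc a b) := by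
    refine lt_of_lt_of_le ?_ (MeasureTheory.measure_mono hsub)
    rw [MeasureTheory.measure_diff_null (hZ.measure_zero _)]
    simpa [Real.volume_Ioc] using (by linarith : (0:ℝ) < b - a)
  have hint : 0 < ∫ r in a..b, f r := by
    rw [intervalIntegral.integral_of_le hab.le]
    refine (MeasureTheory.setIntegral_pos_iff_support_of_nonneg_ae ?_ hintOn).mpr hmeas
    · filter_upwards [MeasureTheory.ae_restrict_mem measurableSet_Ioc] with r hr
      exact hnn r hr
  have := hres t htI s hsI
  nlinarith [mul_neg_of_neg_of_pos (by linarith : M₀ - M₁ < 0) hint]
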